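/- Define h, k : (0, π) → ℝ by h(λ) = sin(λ)/λ and k(λ) = sin(λ) − λ·cos(λ). Then for every ε ≥ 0, every ρ > 0, every s ∈ (0,1) and every p_z ∈ (0, 2π), one has s³·ρ·h(s·p_z/2)·( ε²·h(s·p_z/2) + (2ρ²/(s·p_z³))·k(s·p_z/2) ) ≥ s⁵·ρ·h(p_z/2)·( ε²·h(p_z/2) + (2ρ²/p_z³)·k(p_z/2) ). -/

import Mathlib

private lemma hasDerivAt_kk (x : ℝ) :
    HasDerivAt (fun t => Real.sin t - t * Real.cos t) (x * Real.sin x) x := by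
  have h := (Real.hasDerivAt_sin x).sub ((hasDerivAt_id x).mul (Real.hasDerivAt_cos x))
  refine h.congr_deriv ?_
  simp only [id_eq]
  ring

private lemma kk_nonneg {x : ℝ} (hx : x ∈ Set.Icc 0 Real.pi) :
    0 ≤ Real.sin x - x * Real.cos x := by
  have mono : MonotoneOn (fun t => Real.sin t - t * Real.cos t) (Set.Icc 0 Real.pi) := by
    apply monotoneOn_of_deriv_nonneg (convex_Icc 0 Real.pi)
    · exact (Real.continuous_sin.sub (continuous_id.mul Real.continuous_cos)).continuousOn
    · intro x _
      exact (hasDerivAt_kk x).differentiableAt.differentiableWithinAt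
    · intro x hx
      rw [interior_Icc] at hx
      rw [(hasDerivAt_kk x).deriv]
      exact mul_nonneg hx.1.le (Real.sin_nonneg_of_nonneg_of_le_pi hx.1.le hx.2.le)
  have := mono (Set.left_mem_Icc.2 Real.pi_nonneg) hx hx.1
  simpa using this

private lemma hasDerivAt_ff (x : ℝ) :
    HasDerivAt (fun t => t ^ 2 * Real.sin t + 3 * t * Real.cos t - 3 * Real.sin t)
      (-(x * (Real.sin x - x * Real.cos x))) x := by
  have h := (((hasDerivAt_pow 2 x).mul (Real.hasDerivAt_sin x)).add
      (((hasDerivAt_const x (3:ℝ)).mul (hasDerivAt_id x)).mul (Real.hasDerivAt_cos x))).sub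
      ((hasDerivAt_const x (3:ℝ)).mul (Real.hasDerivAt_sin x))
  refine h.congr_deriv ?_
  simp only [id_eq, Pi.mul_apply]
  push_cast
  ring

private lemma ff_nonpos {x : ℝ} (hx : x ∈ Set.Icc 0 Real.pi) :
    x ^ 2 * Real.sin x + 3 * x * Real.cos x - 3 * Real.sin x ≤ 0 := by
  have anti : AntitoneOn (fun t => t ^ 2 * Real.sin t + 3 * t * Real.cos t - 3 * Real.sin t)
      (Set.Icc 0 Real.pi) := by
    apply antitoneOn_of_deriv_nonpos (convex_Icc 0 Real.pi)
    · exact Continuous.continuousOn (by continuity)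
    · intro x _
      exact (hasDerivAt_ff x).differentiableAt.differentiableWithinAt
    · intro x hx
      rw [interior_Icc] at hx
      rw [(hasDerivAt_ff x).deriv]
      have := kk_nonneg (Set.mem_Icc.2 ⟨hx.1.le, hx.2.le⟩)
      nlinarith [hx.1]
  have := anti (Set.left_mem_Icc.2 Real.pi_nonneg) hx hx.1
  simpa using this

/-- `k(x)/x³` is antitone on `(0, π]`. -/
private lemma kk_cube {a b : ℝ} (ha : 0 < a) (hab : a ≤ b) (hb : b ≤ Real.pi) :
    a ^ 3 * (Real.sin b - b * Real.cos b) ≤ b ^ 3 * (Real.sin a - a * Real.cos a) := by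
  have anti : AntitoneOn (fun t => (Real.sin t - t * Real.cos t) / t ^ 3)
      (Set.Icc a b) := by
    apply antitoneOn_of_deriv_nonpos (convex_Icc a b)
    · apply ContinuousOn.div
      · exact (Real.continuous_sin.sub (continuous_id.mul Real.continuous_cos)).continuousOn
      · exact (continuous_pow 3).continuousOn
      · intro x hx
        exact pow_ne_zero 3 (ne_of_gt (lt_of_lt_of_le ha hx.1))
    · intro x hx
      rw [interior_Icc] at hx
      have hx0 : x ≠ 0 := ne_of_gt (lt_of_lt_of_le ha hx.1.le)
      exact ((hasDerivAt_kk x).div (hasDerivAt_pow 3 x)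
        (pow_ne_zero 3 hx0)).differentiableAt.differentiableWithinAt
    · intro x hx
      rw [interior_Icc] at hx
      have hx0 : 0 < x := lt_of_lt_of_le ha hx.1.le
      rw [show (fun t => (Real.sin t - t * Real.cos t) / t ^ 3) =
          ((fun t => Real.sin t - t * Real.cos t) / fun x => x ^ 3) from rfl,
        ((hasDerivAt_kk x).div (hasDerivAt_pow 3 x) (pow_ne_zero 3 (ne_of_gt hx0))).deriv]
      apply div_nonpos_of_nonpos_of_nonneg
      · have hff := ff_nonpos (Set.mem_Icc.2 ⟨hx0.le, (hx.2.le.trans hb)⟩)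
        push_cast
        norm_num
        nlinarith [pow_pos hx0 2, pow_pos hx0 3]
      · positivity
  have h1 := anti (Set.left_mem_Icc.2 hab) (Set.right_mem_Icc.2 hab) hab
  have hb0 : 0 < b := lt_of_lt_of_le ha hab
  rw [div_le_div_iff₀ (by positivity) (by positivity)] at h1
  nlinarith [h1]

/-- Concavity: `sin (s*λ) ≥ s * sin λ` for `0 ≤ s ≤ 1`, `0 ≤ λ ≤ π`. -/
private lemma sin_mul_ge {s l : ℝ} (hs0 : 0 ≤ s) (hs1 : s ≤ 1) (hl0 : 0 ≤ l)
    (hl : l ≤ Real.pi) : s * Real.sin l ≤ Real.sin (s * l) := by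
  have hc := strictConcaveOn_sin_Icc.concaveOn
  have := hc.2 (Set.mem_Icc.2 ⟨le_refl 0, Real.pi_nonneg⟩) (Set.mem_Icc.2 ⟨hl0, hl⟩)
    (by linarith : (0:ℝ) ≤ 1 - s) hs0 (by ring)
  simp only [smul_eq_mul, Real.sin_zero, mul_zero, zero_add] at this
  convert this using 2

theorem heisenberg_distortion_inequality
    (h k : ℝ → ℝ)
    (hh : ∀ x : ℝ, h x = Real.sin x / x)
    (hk : ∀ x : ℝ, k x = Real.sin x - x * Real.cos x)
    (ε : ℝ) (hε : 0 ≤ ε)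
    (ρ : ℝ) (hρ : 0 < ρ)
    (s : ℝ) (hs : s ∈ Set.Ioo (0 : ℝ) 1)
    (pz : ℝ) (hpz : pz ∈ Set.Ioo (0 : ℝ) (2 * Real.pi)) :
    s ^ 3 * ρ * h (s * pz / 2) *
        (ε ^ 2 * h (s * pz / 2) + (2 * ρ ^ 2 / (s * pz ^ 3)) * k (s * pz / 2)) ≥
      s ^ 5 * ρ * h (pz / 2) *
        (ε ^ 2 * h (pz / 2) + (2 * ρ ^ 2 / pz ^ 3) * k (pz / 2)) := by
  obtain ⟨hs0, hs1⟩ := hs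
  obtain ⟨hpz0, hpz2⟩ := hpz
  set l : ℝ := pz / 2 with hl_def
  have hl0 : 0 < l := by positivity
  have hlpi : l < Real.pi := by rw [hl_def]; linarith
  have ha_eq : s * pz / 2 = s * l := by rw [hl_def]; ring
  have ha0 : 0 < s * l := by positivity
  have hal : s * l ≤ l := by nlinarith
  have hsinl0 : 0 ≤ Real.sin l := Real.sin_nonneg_of_nonneg_of_le_pi hl0.le hlpi.le
  -- key facts
  have hsin : s * Real.sin l ≤ Real.sin (s * l) := sin_mul_ge hs0.le hs1.le hl0.le hlpi.le
  have hHb0 : 0 ≤ h l := by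
    rw [hh]; exact div_nonneg hsinl0 hl0.le
  have hKb0 : 0 ≤ k l := by
    rw [hk]; exact kk_nonneg (Set.mem_Icc.2 ⟨hl0.le, hlpi.le⟩)
  have hHa : s * h l ≤ h (s * l) := by
    rw [hh, hh]
    rw [show s * (Real.sin l / l) = s * Real.sin l / l by ring,
      div_le_div_iff₀ hl0 ha0]
    nlinarith [mul_le_mul_of_nonneg_right hsin hl0.le,
      mul_nonneg (mul_nonneg hs0.le hsinl0) hl0.le]
  have hHa2 : h l ≤ h (s * l) := by
    rw [hh, hh, div_le_div_iff₀ hl0 ha0]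
    nlinarith
  have hHa0 : 0 ≤ h (s * l) := le_trans (by positivity) hHa
  have hKa : s ^ 3 * k l ≤ k (s * l) := by
    rw [hk, hk]
    have := kk_cube ha0 hal hlpi.le
    have hl3 : 0 < l ^ 3 := by positivity
    nlinarith [this]
  rw [ha_eq]
  have hcoef : 2 * ρ ^ 2 / (s * pz ^ 3) = (2 * ρ ^ 2 / pz ^ 3) / s := by
    field_simp
  set C : ℝ := 2 * ρ ^ 2 / pz ^ 3 with hC_def
  have hC0 : 0 < C := by rw [hC_def]; positivity
  rw [hcoef]
  have expand : s ^ 3 * ρ * h (s * l) * (ε ^ 2 * h (s * l) + C / s * k (s * l))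
      = s ^ 3 * ρ * ε ^ 2 * (h (s * l) * h (s * l)) + s ^ 2 * ρ * C * (h (s * l) * k (s * l)) := by
    field_simp
  rw [expand]
  have t1 : s ^ 5 * ρ * ε ^ 2 * (h l * h l) ≤ s ^ 3 * ρ * ε ^ 2 * (h (s * l) * h (s * l)) := by
    have h1 : s * h l * (s * h l) ≤ h (s * l) * h (s * l) :=
      mul_le_mul hHa hHa (by positivity) hHa0
    calc s ^ 5 * ρ * ε ^ 2 * (h l * h l)
        = (s ^ 3 * ρ * ε ^ 2) * (s * h l * (s * h l)) := by ring
      _ ≤ (s ^ 3 * ρ * ε ^ 2) * (h (s * l) * h (s * l)) := by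
          apply mul_le_mul_of_nonneg_left h1 (by positivity)
      _ = s ^ 3 * ρ * ε ^ 2 * (h (s * l) * h (s * l)) := by ring
  have t2 : s ^ 5 * ρ * C * (h l * k l) ≤ s ^ 2 * ρ * C * (h (s * l) * k (s * l)) := by
    have h1 : h l * (s ^ 3 * k l) ≤ h (s * l) * k (s * l) :=
      mul_le_mul hHa2 hKa (by positivity) hHa0
    calc s ^ 5 * ρ * C * (h l * k l)
        = (s ^ 2 * ρ * C) * (h l * (s ^ 3 * k l)) := by ring
      _ ≤ (s ^ 2 * ρ * C) * (h (s * l) * k (s * l)) := by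
          apply mul_le_mul_of_nonneg_left h1 (by positivity)
      _ = s ^ 2 * ρ * C * (h (s * l) * k (s * l)) := by ring
  have hexp2 : s ^ 5 * ρ * h l * (ε ^ 2 * h l + C * k l)
      = s ^ 5 * ρ * ε ^ 2 * (h l * h l) + s ^ 5 * ρ * C * (h l * k l) := by ring
  rw [ge_iff_le, hexp2]
  linarith
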